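/- Let A be a Δ-separable Frobenius algebra in a monoidal category, and suppose the idempotent π on X ⊗ Y (given by acting with Δ∘η on the right of X and the left of Y) splits as π = ι ∘ ϑ with ϑ ∘ ι = id. Then the splitting object is a coequalizer of the two canonical morphisms ρ_X ⊗ id_Y and id_X ⊗ λ_Y from X ⊗ A ⊗ Y to X ⊗ Y; in particular it computes the relative tensor product X ⊗_A Y. -/
import Mathlib


open CategoryTheory MonoidalCategory Limits

section FrobeniusHelpers

variable {C : Type*} [Category C] [MonoidalCategory C]

/-- Swap the inner `Y`-action past the `X`-action. -/
lemma frob_swapS {A X Y : C} (ρX : X ⊗ A ⟶ X) (lY : A ⊗ Y ⟶ Y) :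
    (X ◁ (A ◁ lY)) ≫ (α_ X A Y).inv ≫ (ρX ▷ Y)
      = (α_ X A (A ⊗ Y)).inv ≫ (ρX ▷ (A ⊗ Y)) ≫ (X ◁ lY) := by
  rw [associator_inv_naturality_right_assoc, whisker_exchange]

lemma frob_phi_eq {A : C} (μ : A ⊗ A ⟶ A) (η : 𝟙_ C ⟶ A) (Δ : A ⟶ A ⊗ A)
    (hunitl : (λ_ A).inv ≫ (η ▷ A) ≫ μ = 𝟙 A)
    (hfrob1 : (Δ ▷ A) ≫ (α_ A A A).hom ≫ (A ◁ μ) = μ ≫ Δ) :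
    (λ_ A).inv ≫ ((η ≫ Δ) ▷ A) ≫ (α_ A A A).hom ≫ (A ◁ μ) = Δ := by
  rw [comp_whiskerRight, Category.assoc, hfrob1, ← Category.assoc, ← Category.assoc]
  rw [← Category.assoc] at hunitl
  rw [hunitl, Category.id_comp]

lemma frob_psi_eq {A : C} (μ : A ⊗ A ⟶ A) (η : 𝟙_ C ⟶ A) (Δ : A ⟶ A ⊗ A)
    (hunitr : (ρ_ A).inv ≫ (A ◁ η) ≫ μ = 𝟙 A)
    (hfrob2 : (A ◁ Δ) ≫ (α_ A A A).inv ≫ (μ ▷ A) = μ ≫ Δ) :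
    (ρ_ A).inv ≫ (A ◁ (η ≫ Δ)) ≫ (α_ A A A).inv ≫ (μ ▷ A) = Δ := by
  rw [MonoidalCategory.whiskerLeft_comp, Category.assoc, hfrob2,
    ← Category.assoc, ← Category.assoc]
  rw [← Category.assoc] at hunitr
  rw [hunitr, Category.id_comp]

/-- The `Y`-side key computation. -/
lemma frob_L1 {A Y : C} (μ : A ⊗ A ⟶ A) (κ : 𝟙_ C ⟶ A ⊗ A) (lY : A ⊗ Y ⟶ Y)
    (hYassoc : (α_ A A Y).inv ≫ (μ ▷ Y) ≫ lY = (A ◁ lY) ≫ lY) :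
    lY ≫ (λ_ Y).inv ≫ (κ ▷ Y) ≫ (α_ A A Y).hom ≫ (A ◁ lY)
      = (((λ_ A).inv ≫ (κ ▷ A) ≫ (α_ A A A).hom ≫ (A ◁ μ)) ▷ Y)
          ≫ (α_ A A Y).hom ≫ (A ◁ lY) := by
  rw [leftUnitor_inv_naturality_assoc, whisker_exchange_assoc,
    associator_naturality_right_assoc, ← MonoidalCategory.whiskerLeft_comp,
    ← hYassoc, MonoidalCategory.whiskerLeft_comp, MonoidalCategory.whiskerLeft_comp]
  monoidal

end FrobeniusHelpers

/-- The canonical morphism `π : X ⊗ Y ⟶ X ⊗ Y` obtained by inserting `Δ ∘ η` in the middle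
and acting with its two outputs on `X` (from the right) and `Y` (from the left). -/
noncomputable def canonicalPi {C : Type*} [Category C] [MonoidalCategory C]
    {A X Y : C} (η : 𝟙_ C ⟶ A) (Δ : A ⟶ A ⊗ A)
    (ρX : X ⊗ A ⟶ X) (lY : A ⊗ Y ⟶ Y) : X ⊗ Y ⟶ X ⊗ Y :=
  (X ◁ (λ_ Y).inv) ≫ (X ◁ ((η ≫ Δ) ▷ Y)) ≫ (X ◁ (α_ A A Y).hom) ≫
    (X ◁ (A ◁ lY)) ≫ (α_ X A Y).inv ≫ (ρX ▷ Y)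

section PiLemmas

variable {C : Type*} [Category C] [MonoidalCategory C] {A X Y : C}
  (μ : A ⊗ A ⟶ A) (η : 𝟙_ C ⟶ A) (Δ : A ⟶ A ⊗ A)
  (ρX : X ⊗ A ⟶ X) (lY : A ⊗ Y ⟶ Y)

/-- `g ≫ π = m`. -/
lemma frob_gPi
    (hunitl : (λ_ A).inv ≫ (η ▷ A) ≫ μ = 𝟙 A)
    (hfrob1 : (Δ ▷ A) ≫ (α_ A A A).hom ≫ (A ◁ μ) = μ ≫ Δ)
    (hYassoc : (α_ A A Y).inv ≫ (μ ▷ Y) ≫ lY = (A ◁ lY) ≫ lY) :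
    (X ◁ lY) ≫ canonicalPi η Δ ρX lY
      = (X ◁ ((Δ ▷ Y) ≫ (α_ A A Y).hom ≫ (A ◁ lY))) ≫ (α_ X A Y).inv ≫ (ρX ▷ Y) := by
  have key := frob_L1 μ (η ≫ Δ) lY hYassoc
  rw [frob_phi_eq μ η Δ hunitl hfrob1] at key
  rw [canonicalPi]
  slice_lhs 1 5 =>
    rw [← MonoidalCategory.whiskerLeft_comp, ← MonoidalCategory.whiskerLeft_comp,
      ← MonoidalCategory.whiskerLeft_comp, ← MonoidalCategory.whiskerLeft_comp, key]
  simp only [MonoidalCategory.whiskerLeft_comp, Category.assoc]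

/-- `f ≫ π = m`. -/
lemma frob_fPi
    (hunitr : (ρ_ A).inv ≫ (A ◁ η) ≫ μ = 𝟙 A)
    (hfrob2 : (A ◁ Δ) ≫ (α_ A A A).inv ≫ (μ ▷ A) = μ ≫ Δ)
    (hXassoc : (α_ X A A).hom ≫ (X ◁ μ) ≫ ρX = (ρX ▷ A) ≫ ρX) :
    ((α_ X A Y).inv ≫ (ρX ▷ Y)) ≫ canonicalPi η Δ ρX lY
      = (X ◁ ((Δ ▷ Y) ≫ (α_ A A Y).hom ≫ (A ◁ lY))) ≫ (α_ X A Y).inv ≫ (ρX ▷ Y) := by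
  rw [canonicalPi]
  simp only [MonoidalCategory.whiskerLeft_comp, Category.assoc]
  rw [frob_swapS ρX lY]
  -- LHS chain: 1 α⁻¹, 2 ρX▷Y, 3 X◁λ⁻¹, 4 X◁(κ▷Y), 5 X◁α, 6 α⁻¹, 7 ρX▷(A⊗Y), 8 X◁lY
  slice_lhs 2 3 => rw [← whisker_exchange]
  slice_lhs 3 4 => rw [← whisker_exchange]
  slice_lhs 4 5 => rw [← whisker_exchange]
  slice_lhs 5 6 => rw [associator_inv_naturality_left]
  slice_lhs 6 7 => rw [← comp_whiskerRight, ← hXassoc]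
  conv_rhs => rw [← frob_psi_eq μ η Δ hunitr hfrob2]
  simp only [MonoidalCategory.whiskerLeft_comp, comp_whiskerRight, Category.assoc]
  monoidal

end PiLemmas

/-- If the canonical idempotent `π` on `X ⊗ Y` splits as `π = ι ∘ ϑ` with `ϑ ∘ ι = id`,
then the splitting object is a coequalizer of the two canonical morphisms
`X ⊗ A ⊗ Y ⟶ X ⊗ Y` (acting via `ρX` resp. `lY`); i.e. it computes `X ⊗_A Y`. -/
theorem splitting_isCoequalizer {C : Type*} [Category C] [MonoidalCategory C]
    (A X Y : C)
    (μ : A ⊗ A ⟶ A) (η : 𝟙_ C ⟶ A) (Δ : A ⟶ A ⊗ A) (ε : A ⟶ 𝟙_ C)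
    (hassoc : (α_ A A A).hom ≫ (A ◁ μ) ≫ μ = (μ ▷ A) ≫ μ)
    (hunitl : (λ_ A).inv ≫ (η ▷ A) ≫ μ = 𝟙 A)
    (hunitr : (ρ_ A).inv ≫ (A ◁ η) ≫ μ = 𝟙 A)
    (hcoassoc : Δ ≫ (Δ ▷ A) ≫ (α_ A A A).hom = Δ ≫ (A ◁ Δ))
    (hcounitl : Δ ≫ (ε ▷ A) ≫ (λ_ A).hom = 𝟙 A)
    (hcounitr : Δ ≫ (A ◁ ε) ≫ (ρ_ A).hom = 𝟙 A)
    (hfrob1 : (Δ ▷ A) ≫ (α_ A A A).hom ≫ (A ◁ μ) = μ ≫ Δ)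
    (hfrob2 : (A ◁ Δ) ≫ (α_ A A A).inv ≫ (μ ▷ A) = μ ≫ Δ)
    (hsep : Δ ≫ μ = 𝟙 A)
    (ρX : X ⊗ A ⟶ X)
    (hXassoc : (α_ X A A).hom ≫ (X ◁ μ) ≫ ρX = (ρX ▷ A) ≫ ρX)
    (hXunit : (ρ_ X).inv ≫ (X ◁ η) ≫ ρX = 𝟙 X)
    (lY : A ⊗ Y ⟶ Y)
    (hYassoc : (α_ A A Y).inv ≫ (μ ▷ Y) ≫ lY = (A ◁ lY) ≫ lY)
    (hYunit : (λ_ Y).inv ≫ (η ▷ Y) ≫ lY = 𝟙 Y)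
    (Z : C) (ι : Z ⟶ X ⊗ Y) (ϑ : X ⊗ Y ⟶ Z)
    (hsplit : ϑ ≫ ι = canonicalPi η Δ ρX lY)
    (hretr : ι ≫ ϑ = 𝟙 Z) :
    ∃ h : ((α_ X A Y).inv ≫ (ρX ▷ Y)) ≫ ϑ = (X ◁ lY) ≫ ϑ,
      Nonempty (IsColimit (Cofork.ofπ ϑ h)) := by
  have hϑ : canonicalPi η Δ ρX lY ≫ ϑ = ϑ := by
    rw [← hsplit, Category.assoc, hretr, Category.comp_id]
  have hfg : ((α_ X A Y).inv ≫ (ρX ▷ Y)) ≫ canonicalPi η Δ ρX lY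
      = (X ◁ lY) ≫ canonicalPi η Δ ρX lY := by
    rw [frob_fPi μ η Δ ρX lY hunitr hfrob2 hXassoc,
      frob_gPi μ η Δ ρX lY hunitl hfrob1 hYassoc]
  have h : ((α_ X A Y).inv ≫ (ρX ▷ Y)) ≫ ϑ = (X ◁ lY) ≫ ϑ := by
    conv_lhs => rw [← hϑ]
    conv_rhs => rw [← hϑ]
    rw [← Category.assoc, ← Category.assoc, hfg]
  -- the section `u` of the two maps
  set u : X ⊗ Y ⟶ X ⊗ (A ⊗ Y) :=
    X ◁ ((λ_ Y).inv ≫ ((η ≫ Δ) ▷ Y) ≫ (α_ A A Y).hom ≫ (A ◁ lY)) with hu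
  have hu1 : u ≫ ((α_ X A Y).inv ≫ (ρX ▷ Y)) = canonicalPi η Δ ρX lY := by
    simp only [hu, canonicalPi, MonoidalCategory.whiskerLeft_comp, Category.assoc]
  have hu2 : u ≫ (X ◁ lY) = 𝟙 (X ⊗ Y) := by
    have hc : ((λ_ Y).inv ≫ ((η ≫ Δ) ▷ Y) ≫ (α_ A A Y).hom ≫ (A ◁ lY)) ≫ lY = 𝟙 Y := by
      simp only [Category.assoc]
      rw [← hYassoc, Iso.hom_inv_id_assoc, ← comp_whiskerRight_assoc,
        Category.assoc, hsep, Category.comp_id, hYunit]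
    rw [hu, ← MonoidalCategory.whiskerLeft_comp, hc, MonoidalCategory.whiskerLeft_id]
  refine ⟨h, ⟨Cofork.IsColimit.mk _ (fun s => ι ≫ s.π) ?_ ?_⟩⟩
  · intro s
    have key : canonicalPi η Δ ρX lY ≫ s.π = s.π := by
      rw [← hu1, Category.assoc, s.condition, ← Category.assoc, hu2, Category.id_comp]
    simp only [Cofork.π_ofπ]
    rw [← Category.assoc, hsplit, key]
  · intro s m hm
    simp only [Cofork.π_ofπ] at hm
    show m = ι ≫ s.π
    rw [← hm, ← Category.assoc, hretr, Category.id_comp]
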